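/- For every t > 0 and every real z, the characteristic function of the symmetric Meixner distribution satisfies ∫_ℝ e^{izx} p_t(x) dx = (1/cosh(z/2))^{2t}. -/

import Mathlib

open MeasureTheory

/-- The density of the symmetric Meixner distribution `ρ_t`. -/
noncomputable def meixnerDensity (t x : ℝ) : ℝ :=
  (4 : ℝ) ^ t / (2 * Real.pi * Real.Gamma (2 * t)) *
    ‖Complex.Gamma ((t : ℂ) + (x : ℂ) * Complex.I)‖ ^ 2

namespace MeixnerAux

open Real Set FourierTransform

/-- Target function: `cosh(s/2) ^ (-2t)`. -/
noncomputable def G (t s : ℝ) : ℝ := Real.cosh (s / 2) ^ (-(2 * t))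

noncomputable def Gc (t : ℝ) : ℝ → ℂ := fun s => (G t s : ℂ)

noncomputable def φ (s : ℝ) : ℝ := (1 + Real.exp (-s))⁻¹

lemma one_add_exp_pos (s : ℝ) : 0 < 1 + Real.exp (-s) := by positivity

lemma φ_pos (s : ℝ) : 0 < φ s := by
  unfold φ; positivity

lemma one_sub_φ (s : ℝ) : 1 - φ s = Real.exp (-s) / (1 + Real.exp (-s)) := by
  have h := (one_add_exp_pos s).ne'
  rw [φ, eq_div_iff h, sub_mul, inv_mul_cancel₀ h]; ring

lemma φ_lt_one (s : ℝ) : φ s < 1 := by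
  have h := one_add_exp_pos s
  rw [φ, inv_lt_one_iff₀]
  right
  nlinarith [Real.exp_pos (-s)]

lemma one_sub_φ_pos (s : ℝ) : 0 < 1 - φ s := by linarith [φ_lt_one s]

lemma φ_div (s : ℝ) : φ s / (1 - φ s) = Real.exp s := by
  have h := (one_add_exp_pos s).ne'
  have he := (Real.exp_pos (-s)).ne'
  rw [one_sub_φ, φ]
  field_simp
  rw [← Real.exp_add]
  simp

lemma hasDerivAt_φ (s : ℝ) : HasDerivAt φ (φ s * (1 - φ s)) s := by
  have h1 : HasDerivAt (fun s : ℝ => 1 + Real.exp (-s)) (-Real.exp (-s)) s := by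
    simpa using ((hasDerivAt_neg s).exp.const_add 1)
  have h2 := h1.inv (one_add_exp_pos s).ne'
  refine h2.congr_deriv ?_
  rw [one_sub_φ, φ]
  have h := (one_add_exp_pos s).ne'
  field_simp

lemma cosh_ident (s : ℝ) : 1 + Real.exp (-s) = Real.exp (-(s/2)) * (2 * Real.cosh (s/2)) := by
  rw [Real.cosh_eq]
  rw [mul_comm (2:ℝ), div_mul_cancel₀ _ (two_ne_zero), mul_add, ← Real.exp_add, ← Real.exp_add]
  norm_num
  ring

lemma two_cosh_pos (s : ℝ) : 0 < 2 * Real.cosh (s / 2) := by positivity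

lemma φ_mul (s : ℝ) : φ s * (1 - φ s) = ((2 * Real.cosh (s/2)) ^ (2:ℕ))⁻¹ := by
  rw [one_sub_φ, φ, cosh_ident]
  have h1 := (Real.exp_pos (-(s/2))).ne'
  have h2 := (two_cosh_pos s).ne'
  have : Real.exp (-s) = Real.exp (-(s/2)) * Real.exp (-(s/2)) := by
    rw [← Real.exp_add]; ring_nf
  rw [this]
  field_simp

lemma rpow_key (t s : ℝ) : (φ s * (1 - φ s)) ^ t = (2 * Real.cosh (s/2)) ^ (-(2 * t)) := by
  have h2 := (two_cosh_pos s).le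
  rw [φ_mul, ← Real.rpow_natCast (2 * Real.cosh (s/2)) 2, ← Real.rpow_neg h2,
    ← Real.rpow_mul h2]
  push_cast
  ring_nf

lemma φ_range : range φ = Ioo (0:ℝ) 1 := by
  apply Subset.antisymm
  · rintro _ ⟨s, rfl⟩
    exact ⟨φ_pos s, by linarith [one_sub_φ_pos s]⟩
  · rintro u ⟨hu0, hu1⟩
    refine ⟨-Real.log (u⁻¹ - 1), ?_⟩
    have h1 : (0:ℝ) < u⁻¹ - 1 := by
      have : 1 < u⁻¹ := (one_lt_inv₀ hu0).mpr hu1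
      linarith
    rw [φ, neg_neg, Real.exp_log h1]
    field_simp
    ring

lemma φ_injective : Function.Injective φ := by
  intro a b hab
  have := inv_injective hab
  have h2 : Real.exp (-a) = Real.exp (-b) := by
    have := congrArg (· - 1) this
    simpa [φ] using this
  have h3 := congrArg Real.log h2
  rw [Real.log_exp, Real.log_exp] at h3
  linarith

lemma pointwise (t x s : ℝ) :
    |φ s * (1 - φ s)| •
        (((φ s : ℝ) : ℂ) ^ ((t : ℂ) + (x : ℂ) * Complex.I - 1) *
          (1 - ((φ s : ℝ) : ℂ)) ^ ((t : ℂ) - (x : ℂ) * Complex.I - 1))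
      = Complex.exp ((x : ℂ) * (s : ℂ) * Complex.I) *
          (((2 * Real.cosh (s / 2)) ^ (-(2 * t)) : ℝ) : ℂ) := by
  have hu : 0 < φ s := φ_pos s
  have h1u : 0 < 1 - φ s := one_sub_φ_pos s
  have habs : |φ s * (1 - φ s)| = φ s * (1 - φ s) := abs_of_pos (by positivity)
  -- log abbreviations
  set L : ℝ := Real.log (φ s) with hL
  set M : ℝ := Real.log (1 - φ s) with hM
  have hsLM : L - M = s := by
    rw [hL, hM, ← Real.log_div hu.ne' h1u.ne', φ_div, Real.log_exp]
  have hcoeff : ((φ s * (1 - φ s) : ℝ) : ℂ) = Complex.exp ((L : ℂ) + (M : ℂ)) := by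
    have h9 : φ s * (1 - φ s) = Real.exp (L + M) := by
      rw [Real.exp_add, Real.exp_log hu, Real.exp_log h1u]
    rw [h9, Complex.ofReal_exp, Complex.ofReal_add]
  have hcpow1 : ((φ s : ℝ) : ℂ) ^ ((t : ℂ) + (x : ℂ) * Complex.I - 1)
      = Complex.exp (((t : ℂ) + (x : ℂ) * Complex.I - 1) * (L : ℂ)) := by
    rw [Complex.cpow_def_of_ne_zero (by exact_mod_cast hu.ne'), mul_comm,
      ← Complex.ofReal_log hu.le]
  have hone : 1 - ((φ s : ℝ) : ℂ) = ((1 - φ s : ℝ) : ℂ) := by push_cast; ring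
  have hcpow2 : (1 - ((φ s : ℝ) : ℂ)) ^ ((t : ℂ) - (x : ℂ) * Complex.I - 1)
      = Complex.exp (((t : ℂ) - (x : ℂ) * Complex.I - 1) * (M : ℂ)) := by
    rw [hone, Complex.cpow_def_of_ne_zero (by exact_mod_cast h1u.ne'), mul_comm,
      ← Complex.ofReal_log h1u.le]
  have hrhs : (((2 * Real.cosh (s / 2)) ^ (-(2 * t)) : ℝ) : ℂ)
      = Complex.exp ((t : ℂ) * ((L : ℂ) + (M : ℂ))) := by
    rw [← rpow_key t s, Real.rpow_def_of_pos (by positivity), Complex.ofReal_exp,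
      Real.log_mul hu.ne' h1u.ne']
    push_cast
    ring_nf
    rw [hL, hM]
    ring_nf
  rw [habs, hcpow1, hcpow2, hrhs, Complex.real_smul, hcoeff, ← Complex.exp_add, ← Complex.exp_add,
    ← Complex.exp_add]
  congr 1
  have : (s : ℂ) = (L : ℂ) - (M : ℂ) := by rw [← hsLM]; push_cast; ring
  rw [this]
  ring

lemma beta_eq (t x : ℝ) :
    Complex.betaIntegral ((t : ℂ) + (x : ℂ) * Complex.I) ((t : ℂ) - (x : ℂ) * Complex.I)
      = ∫ s : ℝ, Complex.exp ((x : ℂ) * (s : ℂ) * Complex.I) *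
          (((2 * Real.cosh (s / 2)) ^ (-(2 * t)) : ℝ) : ℂ) := by
  have himg : φ '' univ = Ioo (0:ℝ) 1 := by rw [image_univ, φ_range]
  have key := integral_image_eq_integral_abs_deriv_smul (f := φ)
      (f' := fun s => φ s * (1 - φ s)) MeasurableSet.univ
      (fun s _ => (hasDerivAt_φ s).hasDerivWithinAt) (φ_injective.injOn)
      (fun u : ℝ => ((u : ℝ) : ℂ) ^ ((t : ℂ) + (x : ℂ) * Complex.I - 1) *
        (1 - ((u : ℝ) : ℂ)) ^ ((t : ℂ) - (x : ℂ) * Complex.I - 1))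
  rw [himg, Measure.restrict_univ] at key
  unfold Complex.betaIntegral
  rw [intervalIntegral.integral_of_le zero_le_one, integral_Ioc_eq_integral_Ioo, key]
  exact integral_congr_ae (Filter.Eventually.of_forall fun s => pointwise t x s)

lemma gamma_rep {t : ℝ} (ht : 0 < t) (x : ℝ) :
    ((‖Complex.Gamma ((t : ℂ) + (x : ℂ) * Complex.I)‖ ^ 2 : ℝ) : ℂ)
      = (Real.Gamma (2 * t) : ℂ) *
        ∫ s : ℝ, Complex.exp ((x : ℂ) * (s : ℂ) * Complex.I) *
          (((2 * Real.cosh (s / 2)) ^ (-(2 * t)) : ℝ) : ℂ) := by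
  have h1 : 0 < ((t : ℂ) + (x : ℂ) * Complex.I).re := by simpa using ht
  have h2 : 0 < ((t : ℂ) - (x : ℂ) * Complex.I).re := by simpa using ht
  have hconj : (t : ℂ) - (x : ℂ) * Complex.I
      = (starRingEnd ℂ) ((t : ℂ) + (x : ℂ) * Complex.I) := by
    simp [map_add, map_mul, Complex.conj_ofReal, Complex.conj_I]
    ring
  have hb := Complex.Gamma_mul_Gamma_eq_betaIntegral h1 h2
  have habs : ((‖Complex.Gamma ((t : ℂ) + (x : ℂ) * Complex.I)‖ ^ 2 : ℝ) : ℂ)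
      = Complex.Gamma ((t : ℂ) + (x : ℂ) * Complex.I) *
        Complex.Gamma ((t : ℂ) - (x : ℂ) * Complex.I) := by
    rw [hconj, Complex.Gamma_conj, Complex.mul_conj, Complex.normSq_eq_norm_sq]
  rw [habs, hb, beta_eq]
  congr 1
  have : (t : ℂ) + (x : ℂ) * Complex.I + ((t : ℂ) - (x : ℂ) * Complex.I) = ((2 * t : ℝ) : ℂ) := by
    push_cast; ring
  rw [this, Complex.Gamma_ofReal]

lemma four_pow (t : ℝ) : (4 : ℝ) ^ t * (2 : ℝ) ^ (-(2 * t)) = 1 := by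
  have h4 : (4 : ℝ) = ((2 : ℝ) ^ (2 : ℕ) : ℝ) := by norm_num
  rw [h4, ← Real.rpow_natCast (2:ℝ) 2, ← Real.rpow_mul (by norm_num),
    ← Real.rpow_add (by norm_num)]
  norm_num

lemma density_rep {t : ℝ} (ht : 0 < t) (x : ℝ) :
    ((meixnerDensity t x : ℝ) : ℂ)
      = (((2 * Real.pi)⁻¹ : ℝ) : ℂ) *
        ∫ s : ℝ, Complex.exp ((x : ℂ) * (s : ℂ) * Complex.I) * Gc t s := by
  have hsplit : ∀ s : ℝ, ((((2 * Real.cosh (s / 2)) ^ (-(2 * t)) : ℝ)) : ℂ)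
      = (((2:ℝ) ^ (-(2 * t)) : ℝ) : ℂ) * Gc t s := by
    intro s
    rw [Gc, G, ← Complex.ofReal_mul, ← Real.mul_rpow (by norm_num) (Real.cosh_pos _).le]
  have hint : (∫ s : ℝ, Complex.exp ((x : ℂ) * (s : ℂ) * Complex.I) *
          (((2 * Real.cosh (s / 2)) ^ (-(2 * t)) : ℝ) : ℂ))
      = (((2:ℝ) ^ (-(2 * t)) : ℝ) : ℂ) *
        ∫ s : ℝ, Complex.exp ((x : ℂ) * (s : ℂ) * Complex.I) * Gc t s := by
    have hfun : (fun s : ℝ => Complex.exp ((x : ℂ) * (s : ℂ) * Complex.I) *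
          (((2 * Real.cosh (s / 2)) ^ (-(2 * t)) : ℝ) : ℂ))
        = fun s : ℝ => (((2:ℝ) ^ (-(2 * t)) : ℝ) : ℂ) •
            (Complex.exp ((x : ℂ) * (s : ℂ) * Complex.I) * Gc t s) := by
      funext s
      rw [smul_eq_mul, hsplit s]
      ring
    rw [hfun, integral_smul, smul_eq_mul]
  have hΓ : Real.Gamma (2 * t) ≠ 0 := (Real.Gamma_pos_of_pos (by linarith)).ne'
  have hπ : (Real.pi : ℝ) ≠ 0 := Real.pi_ne_zero
  rw [meixnerDensity, Complex.ofReal_mul, gamma_rep ht, hint]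
  rw [← mul_assoc, ← mul_assoc, ← Complex.ofReal_mul, ← Complex.ofReal_mul]
  congr 2
  field_simp
  linear_combination four_pow t

lemma density_fourier {t : ℝ} (ht : 0 < t) (x : ℝ) :
    ((meixnerDensity t x : ℝ) : ℂ)
      = (((2 * Real.pi)⁻¹ : ℝ) : ℂ) * (𝓕 (Gc t) (-(x / (2 * Real.pi)))) := by
  rw [density_rep ht x]
  congr 1
  rw [Real.fourier_real_eq]
  refine integral_congr_ae (Filter.Eventually.of_forall fun v => ?_)
  have hπ : Real.pi ≠ 0 := Real.pi_ne_zero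
  simp only [Circle.smul_def, Real.fourierChar_apply]
  rw [show 2 * Real.pi * -(v * -(x / (2 * Real.pi))) = x * v by field_simp,
    smul_eq_mul]
  push_cast
  ring

lemma G_cont (t : ℝ) : Continuous (G t) := by
  apply Continuous.rpow_const
  · exact Real.continuous_cosh.comp (continuous_id.div_const 2)
  · exact fun s => Or.inl (Real.cosh_pos _).ne'

lemma G_even (t s : ℝ) : G t (-s) = G t s := by
  rw [G, G, neg_div, Real.cosh_neg]

lemma G_nonneg (t s : ℝ) : 0 ≤ G t s := (Real.rpow_pos_of_pos (Real.cosh_pos _) _).le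

lemma G_bound {t : ℝ} (ht : 0 < t) {s : ℝ} (hs : 0 ≤ s) :
    G t s ≤ (2:ℝ) ^ (2*t) * Real.exp (-t * s) := by
  have h1 : Real.exp (s/2) / 2 ≤ Real.cosh (s/2) := by
    rw [Real.cosh_eq]
    have := (Real.exp_pos (-(s/2))).le
    linarith
  have h2 : (Real.exp (s/2) / 2) ^ (-(2*t)) = (2:ℝ) ^ (2*t) * Real.exp (-t * s) := by
    rw [Real.div_rpow (Real.exp_pos _).le (by norm_num), ← Real.exp_mul,
      Real.rpow_neg (by norm_num : (0:ℝ) ≤ 2), div_inv_eq_mul,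
      show s/2 * (-(2*t)) = -t*s by ring]
    ring
  calc G t s ≤ (Real.exp (s/2) / 2) ^ (-(2*t)) := by
        apply Real.rpow_le_rpow_of_nonpos (by positivity) h1 (by linarith)
    _ = _ := h2

lemma G_integrable {t : ℝ} (ht : 0 < t) : Integrable (G t) := by
  have hIoi : IntegrableOn (G t) (Ioi 0) := by
    apply integrable_of_isBigO_exp_neg ht ((G_cont t).continuousOn)
    apply Asymptotics.IsBigO.of_bound ((2:ℝ) ^ (2*t))
    filter_upwards [Filter.eventually_ge_atTop 0] with s hs
    rw [Real.norm_eq_abs, Real.norm_eq_abs, abs_of_nonneg (G_nonneg t s),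
      abs_of_nonneg (Real.exp_pos _).le]
    exact G_bound ht hs
  have hIic : IntegrableOn (G t) (Iic 0) := by
    rw [← Measure.map_neg_eq_self (volume : Measure ℝ)]
    have m : MeasurableEmbedding fun x : ℝ => -x := (Homeomorph.neg ℝ).measurableEmbedding
    rw [m.integrableOn_map_iff]
    simp only [Function.comp_def, neg_preimage, neg_Iic, neg_zero]
    have : (fun x => G t (-x)) = G t := funext fun x => G_even t x
    rw [this]
    exact (integrableOn_Ici_iff_integrableOn_Ioi).mpr hIoi
  rw [← integrableOn_univ, ← Iic_union_Ioi (a := (0:ℝ))]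
  exact hIic.union hIoi

lemma Gc_integrable {t : ℝ} (ht : 0 < t) : Integrable (Gc t) := (G_integrable ht).ofReal

lemma Gc_continuous (t : ℝ) : Continuous (Gc t) := Complex.continuous_ofReal.comp (G_cont t)

lemma abs_Gamma_le {t : ℝ} (ht : 0 < t) (x : ℝ) :
    ‖Complex.Gamma ((t : ℂ) + (x : ℂ) * Complex.I)‖ ≤ Real.Gamma t := by
  have h1 : 0 < ((t : ℂ) + (x : ℂ) * Complex.I).re := by simpa using ht
  rw [Complex.Gamma_eq_integral h1, Complex.GammaIntegral]
  rw [Real.Gamma_eq_integral ht]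
  refine le_trans (norm_integral_le_integral_norm _) (le_of_eq ?_)
  refine setIntegral_congr_fun measurableSet_Ioi fun s hs => ?_
  rw [norm_mul, Complex.norm_real, Real.norm_eq_abs,
    abs_of_nonneg (Real.exp_pos _).le, Complex.norm_cpow_eq_rpow_re_of_pos hs]
  congr 2
  simp

noncomputable def F (t : ℝ) : ℝ → ℝ :=
  fun x => ‖Complex.Gamma ((t : ℂ) + (x : ℂ) * Complex.I)‖ ^ 2

lemma arg_ne {t : ℝ} (ht : 0 < t) (x : ℝ) (m : ℕ) :
    (t : ℂ) + (x : ℂ) * Complex.I ≠ -(m : ℂ) := by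
  intro h
  have := congrArg Complex.re h
  simp at this
  have : (0:ℝ) < -(m:ℝ) := this ▸ ht
  have h2 : (0:ℝ) ≤ (m:ℝ) := Nat.cast_nonneg m
  linarith

lemma F_cont {t : ℝ} (ht : 0 < t) : Continuous (F t) := by
  have hc : Continuous fun x : ℝ => Complex.Gamma ((t : ℂ) + (x : ℂ) * Complex.I) := by
    apply continuous_iff_continuousAt.mpr
    intro x
    apply ContinuousAt.comp
    · exact (Complex.differentiableAt_Gamma _ (arg_ne ht x)).continuousAt
    · fun_prop
  exact (continuous_norm.comp hc).pow 2

lemma F_even {t : ℝ} (x : ℝ) : F t (-x) = F t x := by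
  unfold F
  have : (t : ℂ) + ((-x : ℝ) : ℂ) * Complex.I
      = (starRingEnd ℂ) ((t : ℂ) + (x : ℂ) * Complex.I) := by
    simp [Complex.conj_ofReal]
  rw [this, Complex.Gamma_conj, Complex.norm_conj]

lemma F_decay {t : ℝ} (ht : 0 < t) {x : ℝ} (hx : 1 ≤ x) :
    F t x ≤ Real.Gamma (t + 1) ^ 2 * x ^ (-2 : ℝ) := by
  have hz : (t : ℂ) + (x : ℂ) * Complex.I ≠ 0 := by
    intro h
    have := congrArg Complex.re h
    simp at this
    linarith
  have hrec : Complex.Gamma ((t : ℂ) + (x : ℂ) * Complex.I)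
      = Complex.Gamma (((t + 1 : ℝ) : ℂ) + (x : ℂ) * Complex.I) / ((t : ℂ) + (x : ℂ) * Complex.I) := by
    rw [show ((t + 1 : ℝ) : ℂ) + (x : ℂ) * Complex.I = ((t : ℂ) + (x : ℂ) * Complex.I) + 1 by
      push_cast; ring, Complex.Gamma_add_one _ hz]
    field_simp
  have h1 : ‖Complex.Gamma (((t + 1 : ℝ) : ℂ) + (x : ℂ) * Complex.I)‖
      ≤ Real.Gamma (t + 1) := abs_Gamma_le (by linarith) x
  have h2 : x ≤ ‖(t : ℂ) + (x : ℂ) * Complex.I‖ := by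
    have := Complex.abs_im_le_norm ((t : ℂ) + (x : ℂ) * Complex.I)
    simp at this
    calc x = |x| := (abs_of_nonneg (by linarith)).symm
      _ ≤ _ := by simpa using this
  have hxpos : (0:ℝ) < x := by linarith
  have habs : ‖Complex.Gamma ((t : ℂ) + (x : ℂ) * Complex.I)‖
      ≤ Real.Gamma (t + 1) / x := by
    rw [hrec, norm_div]
    exact div_le_div₀ (Real.Gamma_pos_of_pos (by linarith)).le h1 hxpos h2
  calc F t x ≤ (Real.Gamma (t + 1) / x) ^ 2 := by
        apply pow_le_pow_left₀ (norm_nonneg _) habs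
    _ = Real.Gamma (t + 1) ^ 2 * x ^ (-2 : ℝ) := by
        rw [div_pow, Real.rpow_neg hxpos.le, div_eq_mul_inv]
        congr 2
        rw [← Real.rpow_natCast x 2]
        norm_num

lemma F_nonneg (t x : ℝ) : 0 ≤ F t x := by unfold F; positivity

lemma F_integrable {t : ℝ} (ht : 0 < t) : Integrable (F t) := by
  have hIci : IntegrableOn (F t) (Ici 1) := by
    rw [integrableOn_Ici_iff_integrableOn_Ioi]
    have hmaj : IntegrableOn (fun x : ℝ => Real.Gamma (t + 1) ^ 2 * x ^ (-2 : ℝ)) (Ioi 1) :=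
      (integrableOn_Ioi_rpow_of_lt (by norm_num) one_pos).const_mul _
    apply Integrable.mono' hmaj ((F_cont ht).aestronglyMeasurable.restrict)
    filter_upwards [ae_restrict_mem measurableSet_Ioi] with x hx
    rw [Real.norm_eq_abs, abs_of_nonneg (F_nonneg t x)]
    exact F_decay ht (le_of_lt hx)
  have hIic : IntegrableOn (F t) (Iic (-1)) := by
    rw [← Measure.map_neg_eq_self (volume : Measure ℝ)]
    have m : MeasurableEmbedding fun x : ℝ => -x := (Homeomorph.neg ℝ).measurableEmbedding
    rw [m.integrableOn_map_iff]
    simp only [Function.comp_def, neg_preimage, neg_Iic, neg_neg]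
    have : (fun x => F t (-x)) = F t := funext fun x => F_even x
    rw [this]
    exact hIci
  have hmid : IntegrableOn (F t) (Icc (-1) 1) :=
    (F_cont ht).continuousOn.integrableOn_compact isCompact_Icc
  have hcover : (Iic (-1) ∪ (Icc (-1) 1 ∪ Ici 1) : Set ℝ) = univ := by
    apply eq_univ_of_forall
    intro x
    rcases le_total x (-1) with h | h
    · exact Or.inl h
    · rcases le_total x 1 with h2 | h2
      · exact Or.inr (Or.inl ⟨h, h2⟩)
      · exact Or.inr (Or.inr h2)
  rw [← integrableOn_univ, ← hcover]
  exact hIic.union (hmid.union hIci)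

lemma density_integrable {t : ℝ} (ht : 0 < t) : Integrable (meixnerDensity t) := by
  unfold meixnerDensity
  exact (F_integrable ht).const_mul _

end MeixnerAux

open Real Set FourierTransform MeixnerAux in
/-- For `t > 0` and real `z`, the characteristic function of the symmetric Meixner
distribution is `∫_ℝ e^{izx} p_t(x) dx = (1/cosh(z/2))^{2t}`. -/
theorem meixner_charFun (t : ℝ) (ht : 0 < t) (z : ℝ) :
    ∫ x : ℝ, Complex.exp (Complex.I * (z : ℂ) * (x : ℂ)) * (meixnerDensity t x : ℂ)
      = (((1 / Real.cosh (z / 2)) ^ (2 * t) : ℝ) : ℂ) := by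
  have hπ : Real.pi ≠ 0 := Real.pi_ne_zero
  have h2π : (0:ℝ) < 2 * Real.pi := by positivity
  -- the Fourier transform of `Gc t` is (up to constants) the Meixner density
  have hFG : 𝓕 (Gc t) = fun w : ℝ =>
      ((2 * Real.pi : ℝ) : ℂ) * ((meixnerDensity t (-(2 * Real.pi) * w) : ℝ) : ℂ) := by
    funext w
    have h := density_fourier ht (-(2 * Real.pi) * w)
    rw [show -((-(2 * Real.pi) * w) / (2 * Real.pi)) = w by field_simp] at h
    rw [h, ← mul_assoc, ← Complex.ofReal_mul,
      show (2 * Real.pi) * (2 * Real.pi)⁻¹ = 1 by field_simp]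
    simp
  have hFG_int : Integrable (𝓕 (Gc t)) := by
    rw [hFG]
    exact (((density_integrable ht).ofReal (𝕜 := ℂ)).comp_mul_left' (by simp [Real.pi_ne_zero] : -(2 * Real.pi) ≠ 0)).const_mul _
  have step1 : (fun x : ℝ => Complex.exp (Complex.I * (z : ℂ) * (x : ℂ)) * (meixnerDensity t x : ℂ))
      = fun x : ℝ => (fun ξ : ℝ => ((2 * Real.pi)⁻¹ : ℝ) • ((Real.fourierChar (-(ξ * z)) : Circle) • 𝓕 (Gc t) ξ)) ((-(2 * Real.pi)⁻¹) * x) := by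
    funext x
    simp only
    rw [show (-(2 * Real.pi)⁻¹) * x = -(x / (2 * Real.pi)) by ring]
    rw [Circle.smul_def, Real.fourierChar_apply, density_fourier ht x, Complex.real_smul,
      show 2 * Real.pi * -(-(x / (2 * Real.pi)) * z) = x * z by field_simp,
      show Complex.I * (z : ℂ) * (x : ℂ) = ((x * z : ℝ) : ℂ) * Complex.I by push_cast; ring,
      smul_eq_mul]
    ring
  rw [step1, MeasureTheory.Measure.integral_comp_mul_left
    (fun ξ : ℝ => ((2 * Real.pi)⁻¹ : ℝ) • ((Real.fourierChar (-(ξ * z)) : Circle) • 𝓕 (Gc t) ξ))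
    (-(2 * Real.pi)⁻¹)]
  rw [integral_smul, show ((-(2 * Real.pi)⁻¹)⁻¹ : ℝ) = -(2 * Real.pi) by field_simp,
    abs_neg, abs_of_pos h2π, smul_smul, mul_inv_cancel₀ h2π.ne', one_smul]
  have step3 : ∫ ξ : ℝ, (Real.fourierChar (-(ξ * z)) : Circle) • 𝓕 (Gc t) ξ
      = 𝓕 (𝓕 (Gc t)) z := (Real.fourier_real_eq _ z).symm
  rw [step3]
  have hinv := (Gc_integrable ht).fourierInv_fourier_eq hFG_int
    ((Gc_continuous t).continuousAt (x := -z))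
  rw [Real.fourierInv_eq_fourier_neg, neg_neg] at hinv
  rw [hinv, Gc, G_even, G, one_div, Real.inv_rpow (Real.cosh_pos _).le,
    ← Real.rpow_neg (Real.cosh_pos _).le]
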